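/- Let S' be an irreducible numerical semigroup with Frobenius number F and let A be a set of minimal generators of S' such that F/2 < x < F for all x ∈ A and x + y - F ∉ S' \ A for all x, y ∈ A. Then S = S' \ A is an almost symmetric numerical semigroup with F(S) = F and t(S) = 2·#A + t(S'). -/

import Mathlib

/-- A numerical semigroup: a cofinite additive submonoid of ℕ. -/
def IsNumericalSemigroup (S : Set ℕ) : Prop :=
  0 ∈ S ∧ (∀ a ∈ S, ∀ b ∈ S, a + b ∈ S) ∧ Sᶜ.Finite

/-- `F` is the Frobenius number of `S`: the largest natural number not in `S`. -/
def IsFrobenius (S : Set ℕ) (F : ℕ) : Prop :=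
  F ∉ S ∧ ∀ n : ℕ, n ∉ S → n ≤ F

/-- The set of pseudo-Frobenius numbers of `S`. -/
def PF (S : Set ℕ) : Set ℕ :=
  {x | x ∉ S ∧ ∀ s ∈ S, s ≠ 0 → x + s ∈ S}

/-- The genus of `S`: the number of gaps. -/
noncomputable def genus (S : Set ℕ) : ℕ := Sᶜ.ncard

/-- The type of `S`: the number of pseudo-Frobenius numbers. -/
noncomputable def typ (S : Set ℕ) : ℕ := (PF S).ncard

/-- The gaps of the second type: gaps `x` such that `F - x` is also a gap. -/
def Lset (S : Set ℕ) (F : ℕ) : Set ℕ := {x | x ∉ S ∧ F - x ∉ S}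

/-- `S` is symmetric with Frobenius number `F`: for every integer `x`,
exactly one of `x ∈ S`, `F - x ∈ S` holds (expressed over `ℕ`). -/
def IsSymmetric (S : Set ℕ) (F : ℕ) : Prop :=
  ∀ x : ℕ, x ≤ F → (x ∈ S ↔ F - x ∉ S)

/-- `S` is pseudo-symmetric with Frobenius number `F`. -/
def IsPseudoSymmetric (S : Set ℕ) (F : ℕ) : Prop :=
  Even F ∧ ∀ x : ℕ, x ≤ F → 2 * x ≠ F → (x ∈ S ↔ F - x ∉ S)

/-- `S` is irreducible: it is not the intersection of two numerical semigroups
properly containing it. -/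
def IsIrreducibleNS (S : Set ℕ) : Prop :=
  IsNumericalSemigroup S ∧
    ¬ ∃ S₁ S₂ : Set ℕ, IsNumericalSemigroup S₁ ∧ IsNumericalSemigroup S₂ ∧
      S ⊂ S₁ ∧ S ⊂ S₂ ∧ S = S₁ ∩ S₂

/-- `x` is a minimal generator of `S`: a nonzero element of `S` that is not a
sum of two nonzero elements of `S`. -/
def IsMinGen (S : Set ℕ) (x : ℕ) : Prop :=
  x ∈ S ∧ x ≠ 0 ∧ ¬ ∃ a ∈ S, ∃ b ∈ S, a ≠ 0 ∧ b ≠ 0 ∧ x = a + b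

/-- `m` is the multiplicity of `S`: its least positive element. -/
def IsMultiplicity (S : Set ℕ) (m : ℕ) : Prop :=
  m ∈ S ∧ m ≠ 0 ∧ ∀ s ∈ S, s ≠ 0 → m ≤ s

lemma frob_gt {S : Set ℕ} {F : ℕ} (hF : IsFrobenius S F) {n : ℕ} (hn : F < n) : n ∈ S := by
  by_contra h
  exact absurd (hF.2 n h) (by omega)

lemma irr_sym {S : Set ℕ} {F : ℕ} (hirr : IsIrreducibleNS S) (hF : IsFrobenius S F) :
    ∀ x : ℕ, x ≤ F → 2 * x ≠ F → (x ∈ S ↔ F - x ∉ S) := by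
  classical
  obtain ⟨⟨h0, hcl, hfin⟩, hmax⟩ := hirr
  have hF0 : F ≠ 0 := fun h => hF.1 (h ▸ h0)
  have fwd : ∀ x, x ≤ F → x ∈ S → F - x ∉ S := by
    intro x hx hxS hFx
    have := hcl x hxS (F - x) hFx
    rw [Nat.add_sub_cancel' hx] at this
    exact hF.1 this
  intro x hx h2x
  refine ⟨fwd x hx, fun hFx => ?_⟩
  by_contra hxS
  set H : Set ℕ := {y | y ∉ S ∧ F - y ∉ S ∧ 2 * y ≠ F} with hHdef
  have hHfin : H.Finite := hfin.subset fun y hy => hy.1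
  have hHne : hHfin.toFinset.Nonempty := ⟨x, by rw [Set.Finite.mem_toFinset]; exact ⟨hxS, hFx, h2x⟩⟩
  obtain ⟨h, hhH, hle⟩ : ∃ h ∈ H, ∀ y ∈ H, y ≤ h := by
    refine ⟨hHfin.toFinset.max' hHne, ?_, fun y hy => Finset.le_max' _ y (by rwa [Set.Finite.mem_toFinset])⟩
    have := hHfin.toFinset.max'_mem hHne
    rwa [Set.Finite.mem_toFinset] at this
  obtain ⟨hhS, hFh, h2h⟩ := hhH
  have hhF : h ≤ F := hF.2 h hhS
  have hh0 : h ≠ 0 := fun he => hhS (he ▸ h0)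
  -- h is above F/2
  have h2big : F < 2 * h := by
    by_contra hlt
    have hFhH : F - h ∈ H := by
      refine ⟨hFh, ?_, by omega⟩
      rw [Nat.sub_sub_self hhF]; exact hhS
    have := hle _ hFhH
    omega
  -- T := insert h S is a numerical semigroup avoiding F
  have hadd : ∀ b ∈ S, h + b ∈ insert h S := by
    intro b hb
    rcases Nat.eq_zero_or_pos b with hb0 | hb0
    · simp [hb0]
    have : h + b ∈ S := by
      by_contra hc
      have hbF : h + b ≤ F := hF.2 _ hc
      have hnotH : h + b ∉ H := fun hm => absurd (hle _ hm) (by omega)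
      have h2hb : 2 * (h + b) ≠ F := by omega
      have hFhb : F - (h + b) ∈ S := by
        by_contra h'
        exact hnotH ⟨hc, h', h2hb⟩
      have := hcl _ hFhb b hb
      have he : F - (h + b) + b = F - h := by omega
      rw [he] at this
      exact hFh this
    exact Set.mem_insert_of_mem _ this
  have hT : IsNumericalSemigroup (insert h S) := by
    refine ⟨Set.mem_insert_of_mem _ h0, ?_, hfin.subset fun y hy => fun hyS => hy (Set.mem_insert_of_mem _ hyS)⟩
    · intro a ha b hb
      rcases Set.mem_insert_iff.1 ha with rfl | haS
      · rcases Set.mem_insert_iff.1 hb with rfl | hbS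
        · exact Set.mem_insert_of_mem _ (frob_gt hF (by omega))
        · exact hadd b hbS
      · rcases Set.mem_insert_iff.1 hb with rfl | hbS
        · rw [add_comm]; exact hadd a haS
        · exact Set.mem_insert_of_mem _ (hcl a haS b hbS)
  have hS2 : IsNumericalSemigroup (insert F S) := by
    refine ⟨Set.mem_insert_of_mem _ h0, ?_, hfin.subset fun y hy => fun hyS => hy (Set.mem_insert_of_mem _ hyS)⟩
    · intro a ha b hb
      rcases Set.mem_insert_iff.1 ha with rfl | haS
      · rcases Set.mem_insert_iff.1 hb with rfl | hbS
        · exact Set.mem_insert_of_mem _ (frob_gt hF (by omega))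
        · rcases Nat.eq_zero_or_pos b with hb0 | hb0
          · simp [hb0]
          · exact Set.mem_insert_of_mem _ (frob_gt hF (by omega))
      · rcases Set.mem_insert_iff.1 hb with rfl | hbS
        · rcases Nat.eq_zero_or_pos a with ha0 | ha0
          · simp [ha0]
          · exact Set.mem_insert_of_mem _ (frob_gt hF (by omega))
        · exact Set.mem_insert_of_mem _ (hcl a haS b hbS)
  have hhF' : h ≠ F := fun he => hFh (by simp [he, h0])
  refine hmax ⟨insert h S, insert F S, hT, hS2, Set.ssubset_insert hhS, Set.ssubset_insert hF.1, ?_⟩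
  ext n
  simp only [Set.mem_inter_iff, Set.mem_insert_iff]
  constructor
  · intro hn; exact ⟨Or.inr hn, Or.inr hn⟩
  · rintro ⟨rfl | hn, h2⟩
    · rcases h2 with rfl | hn
      · exact absurd rfl hhF'
      · exact hn
    · exact hn

lemma sym_data {S : Set ℕ} {F : ℕ} (hNS : IsNumericalSemigroup S) (hF : IsFrobenius S F)
    (hsym : ∀ x : ℕ, x ≤ F → 2 * x ≠ F → (x ∈ S ↔ F - x ∉ S)) :
    2 * genus S = F + typ S ∧ ((Odd F ∧ PF S = {F}) ∨ ∃ c, F = 2 * c ∧ PF S = {c, F}) := by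
  classical
  obtain ⟨h0, hcl, hfin⟩ := hNS
  have hF0 : F ≠ 0 := fun h => hF.1 (h ▸ h0)
  have hFPF : F ∈ PF S := ⟨hF.1, fun s hs hs0 => frob_gt hF (by omega)⟩
  have hbwd : ∀ x : ℕ, x ≤ F → 2 * x ≠ F → x ∉ S → F - x ∈ S := by
    intro x hx h2 hxS
    by_contra h'
    exact hxS ((hsym x hx h2).mpr h')
  -- the finsets of gaps and non-gaps below F
  set N : Finset ℕ := (Finset.range (F + 1)).filter (fun n => n ∈ S) with hN
  set G : Finset ℕ := (Finset.range (F + 1)).filter (fun n => ¬ n ∈ S) with hG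
  have hGN : N.card + G.card = F + 1 := by
    rw [hN, hG, Finset.card_filter_add_card_filter_not, Finset.card_range]
  have hgen : genus S = G.card := by
    rw [genus]
    have : Sᶜ = ↑G := by
      ext n
      simp only [hG, Set.mem_compl_iff, Finset.coe_filter, Finset.mem_range, Set.mem_setOf_eq,
        Finset.mem_coe]
      exact ⟨fun h => ⟨by have := hF.2 n h; omega, h⟩, fun h => h.2⟩
    rw [this, Set.ncard_coe_finset]
  rcases Nat.even_or_odd F with ⟨c, hc⟩ | hodd
  · -- even case, F = c + c
    have hcS : c ∉ S := by
      intro h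
      exact hF.1 (by have := hcl c h c h; rwa [← hc] at this)
    have hcPF : c ∈ PF S := by
      refine ⟨hcS, fun s hs hs0 => ?_⟩
      by_contra hcs
      have hcsF : c + s ≤ F := hF.2 _ hcs
      have := hbwd (c + s) hcsF (by omega) hcs
      have he : F - (c + s) + s = c := by omega
      have := hcl _ this s hs
      rw [he] at this
      exact hcS this
    have hPF : PF S = {c, F} := by
      ext p
      simp only [Set.mem_insert_iff, Set.mem_singleton_iff]
      constructor
      · intro hp
        have hpF : p ≤ F := hF.2 p hp.1
        by_cases h2p : 2 * p = F
        · left; omega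
        · right
          have hFp := hbwd p hpF h2p hp.1
          rcases Nat.eq_zero_or_pos (F - p) with h' | h'
          · omega
          · have := hp.2 _ hFp (by omega)
            rw [Nat.add_sub_cancel' hpF] at this
            exact absurd this hF.1
      · rintro (rfl | rfl)
        · exact hcPF
        · exact hFPF
    have htyp : typ S = 2 := by
      rw [typ, hPF, Set.ncard_pair (by omega : c ≠ F)]
    -- counting: G.card = N.card + 1
    have hcount : G.card = N.card + 1 := by
      have hcN : c ∉ N := by simp [hN, hcS]
      have : G.card = (insert c N).card := by
        refine Finset.card_nbij' (fun a => F - a) (fun b => F - b) ?_ ?_ ?_ ?_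
        · intro a ha
          simp only [hG, Finset.mem_filter, Finset.mem_range, Finset.mem_coe] at ha
          by_cases h2a : 2 * a = F
          · have : F - a = c := by omega
            simp [this]
          · have := hbwd a (by omega) h2a ha.2
            simp only [Finset.mem_insert, hN, Finset.mem_filter, Finset.mem_range, Finset.mem_coe]
            exact Or.inr ⟨by omega, this⟩
        · intro b hb
          rcases Finset.mem_insert.1 hb with rfl | hb
          · simp only [hG, Finset.mem_filter, Finset.mem_range, Finset.mem_coe]
            refine ⟨by omega, fun hmem => hcS (by rwa [show F - b = b from by omega] at hmem)⟩
          · simp only [hN, Finset.mem_filter, Finset.mem_range, Finset.mem_coe] at hb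
            have h2b : 2 * b ≠ F := fun h => hcS (by have hb2 := hb.2; rwa [show b = c from by omega] at hb2)
            have := (hsym b (by omega) h2b).mp hb.2
            simp only [hG, Finset.mem_filter, Finset.mem_range, Finset.mem_coe]
            exact ⟨by omega, this⟩
        · intro a ha
          simp only [hG, Finset.mem_filter, Finset.mem_range, Finset.mem_coe] at ha
          show F - (F - a) = a
          omega
        · intro b hb
          rcases Finset.mem_insert.1 hb with rfl | hb
          · show F - (F - b) = b
            omega
          · simp only [hN, Finset.mem_filter, Finset.mem_range, Finset.mem_coe] at hb
            show F - (F - b) = b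
            omega
      rw [this, Finset.card_insert_of_notMem hcN]
    refine ⟨by rw [hgen, htyp]; omega, Or.inr ⟨c, by omega, hPF⟩⟩
  · -- odd case
    have h2ne : ∀ x : ℕ, 2 * x ≠ F := by obtain ⟨k, hk⟩ := hodd; omega
    have hPF : PF S = {F} := by
      ext p
      simp only [Set.mem_singleton_iff]
      constructor
      · intro hp
        have hpF : p ≤ F := hF.2 p hp.1
        have hFp := hbwd p hpF (h2ne p) hp.1
        rcases Nat.eq_zero_or_pos (F - p) with h' | h'
        · omega
        · have := hp.2 _ hFp (by omega)
          rw [Nat.add_sub_cancel' hpF] at this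
          exact absurd this hF.1
      · rintro rfl; exact hFPF
    have htyp : typ S = 1 := by rw [typ, hPF, Set.ncard_singleton]
    have hcount : G.card = N.card := by
      refine Finset.card_nbij' (fun a => F - a) (fun b => F - b) ?_ ?_ ?_ ?_
      · intro a ha
        simp only [hG, Finset.mem_filter, Finset.mem_range, Finset.mem_coe] at ha
        have := hbwd a (by omega) (h2ne a) ha.2
        simp only [hN, Finset.mem_filter, Finset.mem_range, Finset.mem_coe]
        exact ⟨by omega, this⟩
      · intro b hb
        simp only [hN, Finset.mem_filter, Finset.mem_range, Finset.mem_coe] at hb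
        have := (hsym b (by omega) (h2ne b)).mp hb.2
        simp only [hG, Finset.mem_filter, Finset.mem_range, Finset.mem_coe]
        exact ⟨by omega, this⟩
      · intro a ha
        simp only [hG, Finset.mem_filter, Finset.mem_range, Finset.mem_coe] at ha
        show F - (F - a) = a
        omega
      · intro b hb
        simp only [hN, Finset.mem_filter, Finset.mem_range, Finset.mem_coe] at hb
        show F - (F - b) = b
        omega
    refine ⟨by rw [hgen, htyp]; omega, Or.inl ⟨hodd, hPF⟩⟩

theorem stmt11 (S' : Set ℕ) (F : ℕ) (A : Finset ℕ)
    (hirr : IsIrreducibleNS S') (hF : IsFrobenius S' F)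
    (hgen : ∀ x ∈ A, IsMinGen S' x)
    (hrange : ∀ x ∈ A, F < 2 * x ∧ x < F)
    (hcond : ∀ x ∈ A, ∀ y ∈ A, x + y - F ∉ S' \ ↑A) :
    IsNumericalSemigroup (S' \ ↑A) ∧ IsFrobenius (S' \ ↑A) F ∧
    2 * genus (S' \ ↑A) = F + typ (S' \ ↑A) ∧
    typ (S' \ ↑A) = 2 * A.card + typ S' := by
  classical
  have hsym := irr_sym hirr hF
  obtain ⟨h0', hcl', hfin'⟩ := hirr.1
  have hF0 : F ≠ 0 := fun h => hF.1 (h ▸ h0')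
  have h0A : (0:ℕ) ∉ A := fun h => by have := (hrange 0 h).1; omega
  have hbwd : ∀ x : ℕ, x ≤ F → 2 * x ≠ F → x ∉ S' → F - x ∈ S' := by
    intro x hx h2 hxS
    by_contra h'
    exact hxS ((hsym x hx h2).mpr h')
  -- (i) numerical semigroup
  have hS : IsNumericalSemigroup (S' \ ↑A) := by
    refine ⟨⟨h0', h0A⟩, ?_, ?_⟩
    · rintro a ⟨haS, haA⟩ b ⟨hbS, hbA⟩
      refine ⟨hcl' a haS b hbS, fun hab => ?_⟩
      have hab' : a + b ∈ A := hab
      rcases Nat.eq_zero_or_pos a with rfl | ha0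
      · exact hbA (by simpa using hab)
      rcases Nat.eq_zero_or_pos b with rfl | hb0
      · exact haA (by simpa using hab)
      exact (hgen _ hab').2.2 ⟨a, haS, b, hbS, by omega, by omega, rfl⟩
    · refine Set.Finite.subset (hfin'.union A.finite_toSet) ?_
      intro n hn
      simp only [Set.mem_compl_iff, Set.mem_diff, Finset.mem_coe, not_and, not_not] at hn
      by_cases h : n ∈ S'
      · exact Or.inr (hn h)
      · exact Or.inl h
  have hclS := hS.2.1
  -- (ii) Frobenius
  have hFS : IsFrobenius (S' \ ↑A) F := by
    refine ⟨fun h => hF.1 h.1, fun n hn => ?_⟩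
    by_cases h : n ∈ S'
    · have : n ∈ A := by by_contra h'; exact hn ⟨h, h'⟩
      exact le_of_lt (hrange n this).2
    · exact hF.2 n h
  obtain ⟨hg', hshape⟩ := sym_data hirr.1 hF hsym
  have hFPF : F ∈ PF S' := ⟨hF.1, fun s hs hs0 => frob_gt hF (by omega)⟩
  -- genus relation
  have hdisj0 : Disjoint (S'ᶜ) (↑A : Set ℕ) := by
    rw [Set.disjoint_left]
    intro n hn hnA
    exact hn ((hgen n hnA).1)
  have hgen_eq : genus (S' \ ↑A) = genus S' + A.card := by
    rw [genus, genus]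
    have hc : (S' \ ↑A)ᶜ = S'ᶜ ∪ ↑A := by
      ext n
      simp only [Set.mem_compl_iff, Set.mem_diff, Set.mem_union, Finset.mem_coe, not_and, not_not]
      constructor
      · intro h
        by_cases h' : n ∈ S'
        · exact Or.inr (h h')
        · exact Or.inl h'
      · rintro (h | h)
        · exact fun h' => absurd h' h
        · exact fun _ => h
    rw [hc, Set.ncard_union_eq hdisj0 hfin' A.finite_toSet, Set.ncard_coe_finset]
  -- PF inclusions
  have hPF1 : PF S' ⊆ PF (S' \ ↑A) := by
    intro p hp
    refine ⟨fun h => hp.1 h.1, fun s hs hs0 => ?_⟩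
    refine ⟨hp.2 s hs.1 hs0, fun hmem => ?_⟩
    have hmem' : p + s ∈ A := hmem
    rcases hshape with ⟨hodd, hPFeq⟩ | ⟨c, hc2, hPFeq⟩
    · rw [hPFeq] at hp
      have hpF : p = F := hp
      have := (hrange _ hmem').2
      omega
    · rw [hPFeq] at hp
      simp only [Set.mem_insert_iff, Set.mem_singleton_iff] at hp
      rcases hp with rfl | rfl
      · have h1 := hcond _ hmem' _ hmem'
        have he : (p + s) + (p + s) - F = s + s := by omega
        rw [he] at h1
        exact h1 (hclS s hs s hs)
      · have := (hrange _ hmem').2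
        omega
  have hPF2 : ∀ x ∈ A, x ∈ PF (S' \ ↑A) := by
    intro x hx
    refine ⟨fun h => h.2 hx, fun s hs hs0 => ?_⟩
    refine ⟨hcl' x (hgen x hx).1 s hs.1, fun hmem => ?_⟩
    have hmem' : x + s ∈ A := hmem
    exact (hgen _ hmem').2.2 ⟨x, (hgen x hx).1, s, hs.1, (hgen x hx).2.1, hs0, rfl⟩
  have hPF3 : ∀ x ∈ A, F - x ∈ PF (S' \ ↑A) := by
    intro x hx
    obtain ⟨hx2, hxF⟩ := hrange x hx
    have hxS' := (hgen x hx).1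
    have hFxnot : F - x ∉ S' := (hsym x (le_of_lt hxF) (by omega)).mp hxS'
    refine ⟨fun h => hFxnot h.1, fun s hs hs0 => ?_⟩
    rcases lt_trichotomy s x with hlt | heq | hgt
    · have hxs : x - s ∉ S' := by
        intro h
        exact (hgen x hx).2.2 ⟨x - s, h, s, hs.1, by omega, hs0, by omega⟩
      by_cases h2 : 2 * (x - s) = F
      · exfalso
        have h1 := hcond x hx x hx
        have he : x + x - F = s + s := by omega
        rw [he] at h1
        exact h1 (hclS s hs s hs)
      · have hFxs : F - (x - s) ∈ S' := hbwd (x - s) (by omega) h2 hxs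
        have he : F - (x - s) = F - x + s := by omega
        rw [he] at hFxs
        refine ⟨hFxs, fun hmem => ?_⟩
        have hmem' : F - x + s ∈ A := hmem
        have h1 := hcond x hx _ hmem'
        have he2 : x + (F - x + s) - F = s := by omega
        rw [he2] at h1
        exact h1 hs
    · exact absurd (show s ∈ (↑A : Set ℕ) from by rw [heq]; exact hx) hs.2
    · exact frob_gt hFS (by omega)
  have hPFset : PF (S' \ ↑A) = PF S' ∪ ↑A ∪ (fun x => F - x) '' ↑A := by
    ext p
    simp only [Set.mem_union, Set.mem_image, Finset.mem_coe]
    constructor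
    · intro hp
      by_cases hpA : p ∈ A
      · exact Or.inl (Or.inr hpA)
      by_cases hpPF : p ∈ PF S'
      · exact Or.inl (Or.inl hpPF)
      right
      have hpS' : p ∉ S' := fun h => hp.1 ⟨h, hpA⟩
      have hpF : p ≤ F := hF.2 p hpS'
      have hpneF : p ≠ F := fun h => hpPF (h ▸ hFPF)
      have h2p : 2 * p ≠ F := by
        intro h2
        rcases hshape with ⟨hodd, _⟩ | ⟨c, hc2, hPFeq⟩
        · obtain ⟨k, hk⟩ := hodd; omega
        · refine hpPF ?_
          rw [hPFeq]
          simp only [Set.mem_insert_iff, Set.mem_singleton_iff]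
          left; omega
      have hFp : F - p ∈ S' := hbwd p hpF h2p hpS'
      have hFpA : F - p ∈ A := by
        by_contra h'
        have hmem : F - p ∈ (S' \ ↑A) := ⟨hFp, h'⟩
        have hne : F - p ≠ 0 := by omega
        have := hp.2 _ hmem hne
        rw [Nat.add_sub_cancel' hpF] at this
        exact hFS.1 this
      exact ⟨F - p, hFpA, by omega⟩
    · rintro ((hp | hp) | ⟨x, hxA, rfl⟩)
      · exact hPF1 hp
      · exact hPF2 p hp
      · exact hPF3 x hxA
  -- cardinalities
  have hPFS'fin : (PF S').Finite := hfin'.subset fun p hp => hp.1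
  have himgcard : ((fun x => F - x) '' ↑A).ncard = A.card := by
    rw [Set.ncard_image_of_injOn, Set.ncard_coe_finset]
    intro x hx y hy hxy
    have h1 := (hrange x hx).2
    have h2 := (hrange y hy).2
    simp only at hxy
    omega
  have hbig : ∀ p ∈ PF S', F ≤ 2 * p := by
    intro p hp
    rcases hshape with ⟨_, hPFeq⟩ | ⟨c, hc2, hPFeq⟩
    · rw [hPFeq] at hp
      have : p = F := hp
      omega
    · rw [hPFeq] at hp
      simp only [Set.mem_insert_iff, Set.mem_singleton_iff] at hp
      rcases hp with rfl | rfl <;> omega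
  have hd1 : Disjoint (PF S') (↑A : Set ℕ) := by
    rw [Set.disjoint_left]
    intro p hp hpA
    exact hp.1 (hgen p hpA).1
  have hd2 : Disjoint (PF S' ∪ ↑A) ((fun x => F - x) '' ↑A) := by
    rw [Set.disjoint_left]
    rintro p hp ⟨x, hxA, rfl⟩
    have hxA' : x ∈ A := hxA
    obtain ⟨hx2, hxF⟩ := hrange x hxA'
    rcases hp with hp | hp
    · have := hbig _ hp
      simp only at this
      omega
    · have hp' : F - x ∈ A := hp
      have := (hrange _ hp').1
      omega
  have htypS : typ (S' \ ↑A) = 2 * A.card + typ S' := by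
    rw [typ, hPFset,
      Set.ncard_union_eq hd2 (hPFS'fin.union A.finite_toSet) (A.finite_toSet.image _),
      Set.ncard_union_eq hd1 hPFS'fin A.finite_toSet, himgcard, Set.ncard_coe_finset]
    have : typ S' = (PF S').ncard := rfl
    omega
  refine ⟨hS, hFS, ?_, htypS⟩
  rw [hgen_eq, htypS]
  omega
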